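/- Let G be a graph, v a vertex of G of degree at least 4, and e₁ = vu, e₂ = vw two edges incident to v. Let G′ be obtained from G by deleting e₁ and e₂ and adding the edge uw. If G′ has a cycle double cover, then so does G. -/

import Mathlib

open SimpleGraph

namespace CDCaux

variable {V : Type}

lemma ms_split {α : Type} (E1 E2 : List α) (x y z : α) :
    ((↑(y :: E1) : Multiset α) + ↑(z :: E2.reverse)) + {x} = ↑(x :: (E1 ++ E2)) + {z, y} := by
  have h : (↑(E2.reverse) : Multiset α) = ↑E2 := by simp
  simp only [← Multiset.cons_coe, h, ← Multiset.coe_add, Multiset.insert_eq_cons,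
    ← Multiset.singleton_add]
  abel

lemma ms_reroute {α : Type} (E : List α) (x y z : α) :
    (↑(z :: y :: E) : Multiset α) + {x} = ↑(x :: E) + {z, y} := by
  simp only [← Multiset.cons_coe, Multiset.insert_eq_cons, ← Multiset.singleton_add]
  abel

lemma dart_fst_ne_last {G : SimpleGraph V} :
    ∀ {b c : V} (t : G.Walk b c), t.support.Nodup → ∀ d ∈ t.darts, d.toProd.1 ≠ c := by
  intro b c t
  induction t with
  | nil => intro _ d hd; simp at hd
  | @cons x y z h t ih =>
    intro hnd d hd
    rw [SimpleGraph.Walk.support_cons, List.nodup_cons] at hnd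
    rw [SimpleGraph.Walk.darts_cons, List.mem_cons] at hd
    rcases hd with rfl | hd
    · intro hxz
      exact hnd.1 (hxz ▸ t.end_mem_support)
    · exact ih hnd.2 d hd

lemma cycle_decomp {G' : SimpleGraph V} {u w : V} (p : G'.Walk u u) (hp : p.IsCycle)
    {d : G'.Dart} (hd : d ∈ p.darts) (hfst : d.toProd.1 = u) (hsnd : d.toProd.2 = w) :
    ∃ (h : G'.Adj u w) (t : G'.Walk w u), p = Walk.cons h t := by
  cases p with
  | nil => simp at hd
  | @cons _ b _ h' t =>
    rw [Walk.darts_cons, List.mem_cons] at hd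
    rcases hd with rfl | hd
    · obtain rfl : b = w := hsnd
      exact ⟨h', t, rfl⟩
    · exfalso
      have tnd : t.support.Nodup := by simpa using hp.support_nodup
      exact dart_fst_ne_last t tnd d hd hfst

/-- Total multiset of edges of a list of closed walks. -/
def totalE {G : SimpleGraph V} (l : List (Σ x : V, G.Walk x x)) : Multiset (Sym2 V) :=
  (l.map fun c => (c.2.edges : Multiset (Sym2 V))).sum

@[simp] lemma totalE_nil {G : SimpleGraph V} : totalE ([] : List (Σ x : V, G.Walk x x)) = 0 := rfl

@[simp] lemma totalE_cons {G : SimpleGraph V} (c : Σ x : V, G.Walk x x) (l) :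
    totalE (c :: l) = (c.2.edges : Multiset (Sym2 V)) + totalE l := by
  simp [totalE]

@[simp] lemma totalE_append {G : SimpleGraph V} (l₁ l₂ : List (Σ x : V, G.Walk x x)) :
    totalE (l₁ ++ l₂) = totalE l₁ + totalE l₂ := by
  simp [totalE]

lemma totalE_perm {G : SimpleGraph V} {l₁ l₂ : List (Σ x : V, G.Walk x x)} (h : l₁.Perm l₂) :
    totalE l₁ = totalE l₂ :=
  (h.map _).sum_eq

lemma mem_of_mem_totalE {G : SimpleGraph V} {l : List (Σ x : V, G.Walk x x)} {e : Sym2 V}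
    (h : e ∈ totalE l) : ∃ c ∈ l, e ∈ c.2.edges := by
  induction l with
  | nil => simp [totalE] at h
  | cons c l ih =>
    rw [totalE_cons, Multiset.mem_add] at h
    rcases h with h | h
    · exact ⟨c, List.mem_cons_self, by simpa using h⟩
    · obtain ⟨c', hc', he⟩ := ih h
      exact ⟨c', List.mem_cons_of_mem _ hc', he⟩

lemma card_eq_count [DecidableEq V] {G : SimpleGraph V} {n : ℕ} (f : Fin n → Σ x : V, G.Walk x x)
    (h : ∀ i, (f i).2.edges.Nodup) (e : Sym2 V) :
    Nat.card {i : Fin n // e ∈ (f i).2.edges} = (totalE (List.ofFn f)).count e := by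
  classical
  have h1 : totalE (List.ofFn f) = ∑ i : Fin n, ((f i).2.edges : Multiset (Sym2 V)) := by
    rw [totalE, List.map_ofFn, List.sum_ofFn]
    rfl
  rw [h1, Multiset.count_sum']
  have h2 : ∀ i : Fin n, Multiset.count e ((f i).2.edges : Multiset (Sym2 V))
      = if e ∈ (f i).2.edges then 1 else 0 := by
    intro i
    split_ifs with hi
    · exact Multiset.count_eq_one_of_mem (by exact_mod_cast h i) (by exact_mod_cast hi)
    · exact Multiset.count_eq_zero_of_notMem (by exact_mod_cast hi)
  rw [Finset.sum_congr rfl fun i _ => h2 i, Finset.sum_boole]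
  rw [Nat.card_eq_fintype_card, Fintype.card_subtype]
  simp

lemma count_totalE_eq_length {G : SimpleGraph V} [DecidableEq V] {e : Sym2 V} :
    ∀ (l : List (Σ x : V, G.Walk x x)), (∀ c ∈ l, e ∈ c.2.edges ∧ c.2.edges.Nodup) →
      (totalE l).count e = l.length
  | [], _ => by simp
  | c :: l, h => by
    rw [totalE_cons, Multiset.count_add, count_totalE_eq_length l
      (fun c' hc' => h c' (List.mem_cons_of_mem _ hc'))]
    have hc := h c (List.mem_cons_self)
    rw [Multiset.count_eq_one_of_mem (by exact_mod_cast hc.2) (by exact_mod_cast hc.1)]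
    simp [List.length_cons, Nat.add_comm]

lemma transfer_list {G' G : SimpleGraph V} :
    ∀ (l : List (Σ x : V, G'.Walk x x)), (∀ c ∈ l, c.2.IsCycle) →
      (∀ c ∈ l, ∀ e ∈ c.2.edges, e ∈ G.edgeSet) →
      ∃ m : List (Σ x : V, G.Walk x x), (∀ c ∈ m, c.2.IsCycle) ∧ totalE m = totalE l
  | [], _, _ => ⟨[], by simp, by simp⟩
  | c :: l, h1, h2 => by
    obtain ⟨m, hm1, hm2⟩ := transfer_list l (fun c hc => h1 c (List.mem_cons_of_mem _ hc))
      (fun c hc => h2 c (List.mem_cons_of_mem _ hc))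
    refine ⟨⟨c.1, c.2.transfer G (h2 c (List.mem_cons_self))⟩ :: m, ?_, ?_⟩
    · rintro c' hc'
      rcases List.mem_cons.mp hc' with rfl | hc'
      · exact (h1 c (List.mem_cons_self)).transfer _
      · exact hm1 c' hc'
    · simp [Walk.edges_transfer, hm2]

lemma triangle_cycle {G : SimpleGraph V} {v u w : V} (h₁ : G.Adj v u) (h₂ : G.Adj v w)
    (h₃ : G.Adj u w) :
    ∃ T : G.Walk v v, T.IsCycle ∧
      (T.edges : Multiset (Sym2 V)) = {s(v,u), s(u,w), s(v,w)} := by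
  refine ⟨Walk.cons h₁ (Walk.cons h₃ (Walk.cons h₂.symm Walk.nil)), ?_, ?_⟩
  · rw [Walk.cons_isCycle_iff]
    constructor
    · apply Walk.IsPath.mk'
      simp [h₃.ne, h₁.ne', h₂.ne', h₂.ne]
    · simp [Sym2.eq_iff, h₁.ne, h₂.ne, h₃.ne, h₁.ne', h₂.ne', h₃.ne']
  · show (↑[s(v,u), s(u,w), s(w,v)] : Multiset (Sym2 V)) = _
    rw [show s(w,v) = s(v,w) from Sym2.eq_swap]
    rfl

lemma surgery_dart [DecidableEq V] {G G' : SimpleGraph V} {v u w : V}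
    (h₁ : G.Adj v u) (h₂ : G.Adj v w)
    (hvu' : s(v,u) ∉ G'.edgeSet) (hvw' : s(v,w) ∉ G'.edgeSet)
    (hsub : ∀ e ∈ G'.edgeSet, e ≠ s(u,w) → e ∈ G.edgeSet)
    (h : G'.Adj u w) (t : G'.Walk w u) (hp : (Walk.cons h t).IsCycle) :
    ∃ l : List (Σ x : V, G.Walk x x), (∀ c ∈ l, c.2.IsCycle) ∧
      totalE l + {s(u,w)} = ((Walk.cons h t).edges : Multiset (Sym2 V)) + {s(v,u), s(v,w)} := by
  have hvu : v ≠ u := h₁.ne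
  have hvw : v ≠ w := h₂.ne
  have huw : u ≠ w := h.ne
  have tnodup : t.support.Nodup := by
    have := hp.support_nodup
    simpa using this
  have tpath : t.IsPath := Walk.IsPath.mk' tnodup
  have hnotuw : s(u,w) ∉ t.edges := by
    have := hp.isTrail.edges_nodup
    rw [Walk.edges_cons, List.nodup_cons] at this
    exact this.1
  have hsubG : ∀ e ∈ t.edges, e ∈ G.edgeSet := fun e he =>
    hsub e (t.edges_subset_edgeSet he) (fun h' => hnotuw (h' ▸ he))
  have hvu_t : s(v,u) ∉ t.edges := fun hc => hvu' (t.edges_subset_edgeSet hc)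
  have hvw_t : s(v,w) ∉ t.edges := fun hc => hvw' (t.edges_subset_edgeSet hc)
  by_cases hv : v ∈ t.support
  · -- v lies on t : split into two cycles through v
    have hspec : (t.takeUntil v hv).append (t.dropUntil v hv) = t := t.take_spec hv
    set q1 := t.takeUntil v hv with hq1
    set q2 := t.dropUntil v hv with hq2
    have happ : t.support = q1.support ++ q2.support.tail := by
      rw [← hspec, Walk.support_append]
    have hnd := tnodup
    rw [happ, List.nodup_append] at hnd
    obtain ⟨h1nd, h2nd, hdisj⟩ := hnd
    have hedges : t.edges = q1.edges ++ q2.edges := by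
      rw [← hspec, Walk.edges_append]
    have hq1sub : ∀ e ∈ q1.edges, e ∈ G.edgeSet := fun e he =>
      hsubG e (by rw [hedges]; exact List.mem_append_left _ he)
    have hq2sub : ∀ e ∈ q2.edges, e ∈ G.edgeSet := fun e he =>
      hsubG e (by rw [hedges]; exact List.mem_append_right _ he)
    have hq2nodup : q2.support.Nodup := by
      rw [Walk.support_eq_cons, List.nodup_cons]
      exact ⟨fun hc => hdisj _ q1.end_mem_support _ hc rfl, h2nd⟩
    refine ⟨[⟨v, Walk.cons h₂ (q1.transfer G hq1sub)⟩,
             ⟨v, Walk.cons h₁ ((q2.transfer G hq2sub).reverse)⟩], ?_, ?_⟩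
    · rintro c hc
      simp only [List.mem_cons, List.mem_singleton] at hc
      rcases hc with rfl | rfl | hc
      · rw [Walk.cons_isCycle_iff]
        constructor
        · exact Walk.IsPath.mk' (by rw [Walk.support_transfer]; exact h1nd)
        · rw [Walk.edges_transfer]
          intro hc
          exact hvw_t (by rw [hedges]; exact List.mem_append_left _ hc)
      · rw [Walk.cons_isCycle_iff]
        constructor
        · rw [Walk.isPath_reverse_iff]
          exact Walk.IsPath.mk' (by rw [Walk.support_transfer]; exact hq2nodup)
        · rw [Walk.edges_reverse, List.mem_reverse, Walk.edges_transfer]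
          intro hc
          exact hvu_t (by rw [hedges]; exact List.mem_append_right _ hc)
      · exact absurd hc List.not_mem_nil
    · simp only [totalE_cons, totalE_nil, Walk.edges_cons, Walk.edges_reverse,
        Walk.edges_transfer, hedges, add_zero]
      exact ms_split q1.edges q2.edges s(u,w) s(v,w) s(v,u)
  · -- v does not lie on t : reroute through v
    have huv_t : s(u,v) ∉ t.edges := fun hc => hv (t.snd_mem_support_of_mem_edges hc)
    refine ⟨[⟨u, Walk.cons h₁.symm (Walk.cons h₂ (t.transfer G hsubG))⟩], ?_, ?_⟩
    · rintro c hc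
      simp only [List.mem_singleton] at hc
      subst hc
      rw [Walk.cons_isCycle_iff]
      constructor
      · rw [Walk.cons_isPath_iff]
        refine ⟨tpath.transfer _, ?_⟩
        rw [Walk.support_transfer]
        exact hv
      · rw [Walk.edges_cons, Walk.edges_transfer, List.mem_cons]
        rintro (hc | hc)
        · rw [Sym2.eq_iff] at hc
          exact huw (hc.elim (fun x => x.1.trans x.2) fun x => x.1)
        · exact huv_t hc
    · have hswap : s(u,v) = s(v,u) := Sym2.eq_swap
      simp only [totalE_cons, totalE_nil, Walk.edges_cons, Walk.edges_transfer, hswap, add_zero]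
      exact ms_reroute t.edges s(u,w) s(v,w) s(v,u)

lemma surgery [DecidableEq V] {G G' : SimpleGraph V} {v u w : V}
    (h₁ : G.Adj v u) (h₂ : G.Adj v w)
    (hvu' : s(v,u) ∉ G'.edgeSet) (hvw' : s(v,w) ∉ G'.edgeSet)
    (hsub : ∀ e ∈ G'.edgeSet, e ≠ s(u,w) → e ∈ G.edgeSet)
    {x : V} (p : G'.Walk x x) (hp : p.IsCycle) (he : s(u,w) ∈ p.edges) :
    ∃ l : List (Σ y : V, G.Walk y y), (∀ c ∈ l, c.2.IsCycle) ∧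
      totalE l + {s(u,w)} = (p.edges : Multiset (Sym2 V)) + {s(v,u), s(v,w)} := by
  obtain ⟨d, hd, hde⟩ := List.mem_map.mp he
  rw [dart_edge_eq_mk'_iff'] at hde
  rcases hde with ⟨hfst, hsnd⟩ | ⟨hfst, hsnd⟩
  · have hus : u ∈ p.support := hfst ▸ Walk.dart_fst_mem_support_of_mem_darts p hd
    have hp' : (p.rotate u hus).IsCycle := hp.rotate hus
    have hd' : d ∈ (p.rotate u hus).darts := ((p.rotate_darts u hus).perm.mem_iff).mpr hd
    have hedg : ((p.rotate u hus).edges : Multiset (Sym2 V)) = ↑p.edges :=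
      Multiset.coe_eq_coe.mpr (p.rotate_edges u hus).perm
    obtain ⟨hadj, t, hEq⟩ := cycle_decomp (p.rotate u hus) hp' hd' hfst hsnd
    obtain ⟨l, hl1, hl2⟩ := surgery_dart h₁ h₂ hvu' hvw' hsub hadj t (hEq ▸ hp')
    refine ⟨l, hl1, ?_⟩
    rw [hl2, ← hedg, hEq]
  · have hws : w ∈ p.support := hfst ▸ Walk.dart_fst_mem_support_of_mem_darts p hd
    have hp' : (p.rotate w hws).IsCycle := hp.rotate hws
    have hd' : d ∈ (p.rotate w hws).darts := ((p.rotate_darts w hws).perm.mem_iff).mpr hd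
    have hedg : ((p.rotate w hws).edges : Multiset (Sym2 V)) = ↑p.edges :=
      Multiset.coe_eq_coe.mpr (p.rotate_edges w hws).perm
    obtain ⟨hadj, t, hEq⟩ := cycle_decomp (p.rotate w hws) hp' hd' hfst hsnd
    have hsub' : ∀ e ∈ G'.edgeSet, e ≠ s(w,u) → e ∈ G.edgeSet := by
      intro e he hne
      exact hsub e he (by rwa [show s(u,w) = s(w,u) from Sym2.eq_swap])
    obtain ⟨l, hl1, hl2⟩ := surgery_dart h₂ h₁ hvw' hvu' hsub' hadj t (hEq ▸ hp')
    refine ⟨l, hl1, ?_⟩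
    rw [show s(u,w) = s(w,u) from Sym2.eq_swap,
      show ({s(v,u), s(v,w)} : Multiset (Sym2 V)) = {s(v,w), s(v,u)} from Multiset.pair_comm _ _,
      hl2, ← hedg, hEq]

end CDCaux
/-- A cycle double cover of `G`: a family of cycles of `G` such that every edge of `G`
lies on exactly two members of the family. -/
def HasCycleDoubleCover {V : Type} (G : SimpleGraph V) : Prop :=
  ∃ (n : ℕ) (f : Fin n → Σ v : V, G.Walk v v),
    (∀ i, (f i).2.IsCycle) ∧
    ∀ e ∈ G.edgeSet, Nat.card {i : Fin n // e ∈ (f i).2.edges} = 2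

namespace CDCaux

lemma cdc_of_list [DecidableEq V] {G : SimpleGraph V} (l : List (Σ x : V, G.Walk x x))
    (hcyc : ∀ c ∈ l, c.2.IsCycle) (hcnt : ∀ e ∈ G.edgeSet, (totalE l).count e = 2) :
    HasCycleDoubleCover G := by
  refine ⟨l.length, l.get, fun i => hcyc _ (l.get_mem _), fun e he => ?_⟩
  rw [card_eq_count l.get
    (fun i => (hcyc _ (l.get_mem _)).isCircuit.isTrail.edges_nodup) e, List.ofFn_get]
  exact hcnt e he

end CDCaux

open CDCaux in
/-- Splitting off: let `v` be a vertex of degree at least `4` and `e₁ = vu`, `e₂ = vw`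
two edges at `v`; let `G′` be obtained from `G` by deleting `e₁`, `e₂` and adding the
edge `uw`.  If `G′` has a cycle double cover, then so does `G`. -/
theorem stmt_14 {V : Type} [Fintype V] [DecidableEq V]
    (G : SimpleGraph V) [DecidableRel G.Adj]
    (v u w : V) (huw : u ≠ w)
    (h₁ : G.Adj v u) (h₂ : G.Adj v w)
    (hdeg : 4 ≤ G.degree v)
    (G' : SimpleGraph V)
    (hG' : G' = SimpleGraph.fromEdgeSet
      ((G.edgeSet \ {s(v, u), s(v, w)}) ∪ {s(u, w)}))
    (hcdc : HasCycleDoubleCover G') :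
    HasCycleDoubleCover G := by
  classical
  obtain ⟨n, f, hcyc, hcnt⟩ := hcdc
  have hvu0 : v ≠ u := h₁.ne
  have hvw0 : v ≠ w := h₂.ne
  have hGE : G'.edgeSet
      = ((G.edgeSet \ {s(v,u), s(v,w)}) ∪ {s(u,w)}) \ {e : Sym2 V | e.IsDiag} := by
    rw [hG', edgeSet_fromEdgeSet]
    rfl
  -- basic disequalities between the three special edges
  have ne1 : s(v,u) ≠ s(u,w) := by simp [Sym2.eq_iff, hvu0, hvw0]
  have ne2 : s(v,w) ≠ s(u,w) := by simp [Sym2.eq_iff, hvu0, hvw0]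
  have ne3 : s(v,u) ≠ s(v,w) := by simp [Sym2.eq_iff, huw, hvw0]
  have hvu' : s(v,u) ∉ G'.edgeSet := by
    rw [hGE]
    rintro ⟨(⟨-, hno⟩ | hsing), -⟩
    · exact hno (by simp)
    · exact ne1 hsing
  have hvw' : s(v,w) ∉ G'.edgeSet := by
    rw [hGE]
    rintro ⟨(⟨-, hno⟩ | hsing), -⟩
    · exact hno (by simp)
    · exact ne2 hsing
  have hsub : ∀ e ∈ G'.edgeSet, e ≠ s(u,w) → e ∈ G.edgeSet := by
    intro e he hne
    rw [hGE] at he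
    rcases he.1 with ⟨heG, -⟩ | hsing
    · exact heG
    · exact absurd hsing hne
  have huwE' : s(u,w) ∈ G'.edgeSet := by
    rw [hGE]
    exact ⟨Or.inr rfl, by simp [huw]⟩
  -- pass to the list formulation
  set l₀ : List (Σ x : V, G'.Walk x x) := List.ofFn f with hl₀
  have hcyc₀ : ∀ c ∈ l₀, c.2.IsCycle := by
    intro c hc
    rw [hl₀, List.mem_ofFn] at hc
    obtain ⟨i, rfl⟩ := hc
    exact hcyc i
  have hnodup : ∀ i, (f i).2.edges.Nodup := fun i => (hcyc i).isCircuit.isTrail.edges_nodup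
  have hcnt₀ : ∀ e ∈ G'.edgeSet, (totalE l₀).count e = 2 := by
    intro e he
    rw [hl₀, ← card_eq_count f hnodup e]
    exact hcnt e he
  have hzero : ∀ e, e ∉ G'.edgeSet → (totalE l₀).count e = 0 := by
    intro e he
    rw [Multiset.count_eq_zero]
    intro hmem
    obtain ⟨c, hc, hce⟩ := mem_of_mem_totalE hmem
    exact he (c.2.edges_subset_edgeSet hce)
  -- exactly two members of the cover use the new edge
  set P : (Σ x : V, G'.Walk x x) → Bool := fun c => decide (s(u,w) ∈ c.2.edges) with hP
  have hperm : (l₀.filter P ++ l₀.filter (fun c => !P c)).Perm l₀ := List.filter_append_perm _ _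
  have htot : totalE l₀ = totalE (l₀.filter P) + totalE (l₀.filter fun c => !P c) := by
    rw [← totalE_perm hperm, totalE_append]
  have hmemP : ∀ c ∈ l₀.filter P, s(u,w) ∈ c.2.edges ∧ c.2.edges.Nodup := by
    intro c hc
    rw [List.mem_filter] at hc
    exact ⟨by simpa [hP] using hc.2,
      ((hcyc₀ c hc.1).isCircuit.isTrail).edges_nodup⟩
  have hcntP : (totalE (l₀.filter P)).count s(u,w) = (l₀.filter P).length :=
    count_totalE_eq_length _ hmemP
  have hcntNP : (totalE (l₀.filter fun c => !P c)).count s(u,w) = 0 := by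
    rw [Multiset.count_eq_zero]
    intro hmem
    obtain ⟨c, hc, hce⟩ := mem_of_mem_totalE hmem
    rw [List.mem_filter] at hc
    have := hc.2
    simp [hP] at this
    exact this hce
  have hlen : (l₀.filter P).length = 2 := by
    have h2 := hcnt₀ s(u,w) huwE'
    rw [htot, Multiset.count_add, hcntP, hcntNP] at h2
    omega
  obtain ⟨c₁, c₂, hc12⟩ := List.length_eq_two.mp hlen
  have hc₁ : c₁ ∈ l₀.filter P := by rw [hc12]; simp
  have hc₂ : c₂ ∈ l₀.filter P := by rw [hc12]; simp
  have hc₁l : c₁ ∈ l₀ := (List.mem_filter.mp hc₁).1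
  have hc₂l : c₂ ∈ l₀ := (List.mem_filter.mp hc₂).1
  -- surgery on the first special cycle
  obtain ⟨l₁, hl₁cyc, hl₁⟩ :=
    surgery h₁ h₂ hvu' hvw' hsub c₁.2 (hcyc₀ c₁ hc₁l) (hmemP c₁ hc₁).1
  -- the remaining cycles avoid the new edge and transfer to G
  have hrest_sub : ∀ c ∈ (l₀.filter fun c => !P c), ∀ e ∈ c.2.edges, e ∈ G.edgeSet := by
    intro c hc e he
    rw [List.mem_filter] at hc
    refine hsub e (c.2.edges_subset_edgeSet he) ?_
    rintro rfl
    have := hc.2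
    simp [hP] at this
    exact this he
  obtain ⟨mrest, hmrest_cyc, hmrest⟩ := transfer_list _
    (fun c hc => hcyc₀ c (List.mem_filter.mp hc).1) hrest_sub
  have htotal : totalE l₀
      = (c₁.2.edges : Multiset (Sym2 V)) + (c₂.2.edges : Multiset (Sym2 V)) + totalE mrest := by
    rw [htot, hc12, ← hmrest]
    simp [add_assoc]
  -- count bookkeeping, for a fixed edge e of G
  have hcount : ∀ e ∈ G.edgeSet,
      (totalE l₁).count e + ({s(u,w)} : Multiset (Sym2 V)).count e
        = (c₁.2.edges : Multiset (Sym2 V)).count e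
          + ({s(v,u), s(v,w)} : Multiset (Sym2 V)).count e := by
    intro e _
    rw [← Multiset.count_add, hl₁, Multiset.count_add]
  by_cases huwG : s(u,w) ∈ G.edgeSet
  · -- `uw` is also an edge of `G`: keep the second special cycle, add the triangle
    have hc₂sub : ∀ e ∈ c₂.2.edges, e ∈ G.edgeSet := by
      intro e he
      by_cases h' : e = s(u,w)
      · rwa [h']
      · exact hsub e (c₂.2.edges_subset_edgeSet he) h'
    obtain ⟨m₂, hm₂cyc, hm₂⟩ := transfer_list [c₂]
      (by intro c hc; rw [List.mem_singleton] at hc; rw [hc]; exact hcyc₀ c₂ hc₂l)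
      (by intro c hc e he'; rw [List.mem_singleton] at hc; rw [hc] at he'; exact hc₂sub e he')
    obtain ⟨T, hTcyc, hTedges⟩ := triangle_cycle h₁ h₂ huwG
    refine cdc_of_list (mrest ++ l₁ ++ m₂ ++ [⟨v, T⟩]) ?_ ?_
    · intro c hc
      simp only [List.mem_append, List.mem_singleton] at hc
      rcases hc with ((hc | hc) | hc) | rfl
      · exact hmrest_cyc c hc
      · exact hl₁cyc c hc
      · exact hm₂cyc c hc
      · exact hTcyc
    · intro e he
      have hEq := hcount e he
      have hm₂e : (totalE m₂).count e = (c₂.2.edges : Multiset (Sym2 V)).count e := by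
        rw [hm₂]
        simp
      have htote := congrArg (Multiset.count e) htotal
      rw [Multiset.count_add, Multiset.count_add] at htote
      have hfin : (totalE (mrest ++ l₁ ++ m₂ ++ [⟨v, T⟩])).count e
          = (totalE mrest).count e + (totalE l₁).count e + (totalE m₂).count e
            + (T.edges : Multiset (Sym2 V)).count e := by
        simp [Multiset.count_add]
        omega
      rw [hfin, hm₂e, hTedges]
      have hc₁cnt := hmemP c₁ hc₁
      have hc₂cnt := hmemP c₂ hc₂
      by_cases hx1 : e = s(v,u)
      · subst hx1
        have hz : (totalE l₀).count s(v,u) = 0 := hzero _ hvu'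
        rw [hz] at htote
        have cS : ({s(u,w)} : Multiset (Sym2 V)).count s(v,u) = 0 := by
          simp [Multiset.count_singleton, ne1]
        have cD : ({s(v,u), s(v,w)} : Multiset (Sym2 V)).count s(v,u) = 1 := by
          simp [Multiset.insert_eq_cons, Multiset.count_cons, Multiset.count_singleton, ne3]
        have cT : ({s(v,u), s(u,w), s(v,w)} : Multiset (Sym2 V)).count s(v,u) = 1 := by
          simp [Multiset.insert_eq_cons, Multiset.count_cons, Multiset.count_singleton, ne1, ne3]
        rw [cS, cD] at hEq
        rw [cT]
        omega
      · by_cases hx2 : e = s(v,w)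
        · subst hx2
          have hz : (totalE l₀).count s(v,w) = 0 := hzero _ hvw'
          rw [hz] at htote
          have cS : ({s(u,w)} : Multiset (Sym2 V)).count s(v,w) = 0 := by
            simp [Multiset.count_singleton, ne2]
          have cD : ({s(v,u), s(v,w)} : Multiset (Sym2 V)).count s(v,w) = 1 := by
            simp [Multiset.insert_eq_cons, Multiset.count_cons, Multiset.count_singleton,
              Ne.symm ne3]
          have cT : ({s(v,u), s(u,w), s(v,w)} : Multiset (Sym2 V)).count s(v,w) = 1 := by
            simp [Multiset.insert_eq_cons, Multiset.count_cons, Multiset.count_singleton,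
              ne2, Ne.symm ne3]
          rw [cS, cD] at hEq
          rw [cT]
          omega
        · by_cases hx3 : e = s(u,w)
          · subst hx3
            have hz : (totalE l₀).count s(u,w) = 2 := hcnt₀ _ huwE'
            have hcc1 : (c₁.2.edges : Multiset (Sym2 V)).count s(u,w) = 1 :=
              Multiset.count_eq_one_of_mem (by exact_mod_cast hc₁cnt.2)
                (by exact_mod_cast hc₁cnt.1)
            have hcc2 : (c₂.2.edges : Multiset (Sym2 V)).count s(u,w) = 1 :=
              Multiset.count_eq_one_of_mem (by exact_mod_cast hc₂cnt.2)
                (by exact_mod_cast hc₂cnt.1)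
            rw [hz, hcc1, hcc2] at htote
            have cS : ({s(u,w)} : Multiset (Sym2 V)).count s(u,w) = 1 := by
              simp [Multiset.count_singleton]
            have cD : ({s(v,u), s(v,w)} : Multiset (Sym2 V)).count s(u,w) = 0 := by
              simp [Multiset.insert_eq_cons, Multiset.count_cons, Multiset.count_singleton,
                Ne.symm ne1, Ne.symm ne2]
            have cT : ({s(v,u), s(u,w), s(v,w)} : Multiset (Sym2 V)).count s(u,w) = 1 := by
              simp [Multiset.insert_eq_cons, Multiset.count_cons, Multiset.count_singleton,
                Ne.symm ne1, Ne.symm ne2]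
            rw [cS, cD, hcc1] at hEq
            rw [cT, hcc2]
            omega
          · have heG' : e ∈ G'.edgeSet := by
              rw [hGE]
              refine ⟨Or.inl ⟨he, ?_⟩, G.not_isDiag_of_mem_edgeSet he⟩
              intro hmem
              rcases hmem with hmem | hmem
              · exact hx1 hmem
              · exact hx2 hmem
            have hz : (totalE l₀).count e = 2 := hcnt₀ _ heG'
            rw [hz] at htote
            have cS : ({s(u,w)} : Multiset (Sym2 V)).count e = 0 := by
              simp [Multiset.count_singleton, hx3]
            have cD : ({s(v,u), s(v,w)} : Multiset (Sym2 V)).count e = 0 := by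
              simp [Multiset.insert_eq_cons, Multiset.count_cons, Multiset.count_singleton,
                hx1, hx2]
            have cT : ({s(v,u), s(u,w), s(v,w)} : Multiset (Sym2 V)).count e = 0 := by
              simp [Multiset.insert_eq_cons, Multiset.count_cons, Multiset.count_singleton,
                hx1, hx2, hx3]
            rw [cS, cD] at hEq
            rw [cT]
            omega
  · -- `uw` is not an edge of `G`: do surgery on both special cycles
    obtain ⟨l₂, hl₂cyc, hl₂⟩ :=
      surgery h₁ h₂ hvu' hvw' hsub c₂.2 (hcyc₀ c₂ hc₂l) (hmemP c₂ hc₂).1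
    have hcount₂ : ∀ e ∈ G.edgeSet,
        (totalE l₂).count e + ({s(u,w)} : Multiset (Sym2 V)).count e
          = (c₂.2.edges : Multiset (Sym2 V)).count e
            + ({s(v,u), s(v,w)} : Multiset (Sym2 V)).count e := by
      intro e _
      rw [← Multiset.count_add, hl₂, Multiset.count_add]
    refine cdc_of_list (mrest ++ l₁ ++ l₂) ?_ ?_
    · intro c hc
      simp only [List.mem_append] at hc
      rcases hc with (hc | hc) | hc
      · exact hmrest_cyc c hc
      · exact hl₁cyc c hc
      · exact hl₂cyc c hc
    · intro e he
      have hEq := hcount e he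
      have hEq₂ := hcount₂ e he
      have htote := congrArg (Multiset.count e) htotal
      rw [Multiset.count_add, Multiset.count_add] at htote
      have hfin : (totalE (mrest ++ l₁ ++ l₂)).count e
          = (totalE mrest).count e + (totalE l₁).count e + (totalE l₂).count e := by
        simp [Multiset.count_add]
        omega
      rw [hfin]
      have hx3 : e ≠ s(u,w) := fun h => huwG (h ▸ he)
      have cS : ({s(u,w)} : Multiset (Sym2 V)).count e = 0 := by
        simp [Multiset.count_singleton, hx3]
      rw [cS] at hEq hEq₂
      by_cases hx1 : e = s(v,u)
      · subst hx1
        have hz : (totalE l₀).count s(v,u) = 0 := hzero _ hvu'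
        rw [hz] at htote
        have cD : ({s(v,u), s(v,w)} : Multiset (Sym2 V)).count s(v,u) = 1 := by
          simp [Multiset.insert_eq_cons, Multiset.count_cons, Multiset.count_singleton, ne3]
        rw [cD] at hEq hEq₂
        omega
      · by_cases hx2 : e = s(v,w)
        · subst hx2
          have hz : (totalE l₀).count s(v,w) = 0 := hzero _ hvw'
          rw [hz] at htote
          have cD : ({s(v,u), s(v,w)} : Multiset (Sym2 V)).count s(v,w) = 1 := by
            simp [Multiset.insert_eq_cons, Multiset.count_cons, Multiset.count_singleton,
              Ne.symm ne3]
          rw [cD] at hEq hEq₂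
          omega
        · have heG' : e ∈ G'.edgeSet := by
            rw [hGE]
            refine ⟨Or.inl ⟨he, ?_⟩, G.not_isDiag_of_mem_edgeSet he⟩
            intro hmem
            rcases hmem with hmem | hmem
            · exact hx1 hmem
            · exact hx2 hmem
          have hz : (totalE l₀).count e = 2 := hcnt₀ _ heG'
          rw [hz] at htote
          have cD : ({s(v,u), s(v,w)} : Multiset (Sym2 V)).count e = 0 := by
            simp [Multiset.insert_eq_cons, Multiset.count_cons, Multiset.count_singleton,
              hx1, hx2]
          rw [cD] at hEq hEq₂
          omega
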